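/- Let R be an object unital G-graded ring, M a graded unital left R-module, σ ∈ G, and m ∈ M_σ. Then the cyclic submodule Rm equals R(σ⁻¹)m, and Rm is a graded unital G-graded submodule of M; that is, for each τ ∈ G, (Rm) ∩ M_τ = R(σ⁻¹)_τ m. -/

import Mathlib

open CategoryTheory

/-- The arrows of a groupoid, bundled with their endpoints. -/
abbrev GArrow (G : Type*) [Groupoid G] := Σ a b : G, a ⟶ b

namespace GArrow

variable {G : Type*} [Groupoid G]

/-- The unit arrow at an object. -/
def unit (a : G) : GArrow G := ⟨a, a, 𝟙 a⟩

/-- The inverse arrow `σ⁻¹`. -/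
def ginv (σ : GArrow G) : GArrow G := ⟨σ.2.1, σ.1, Groupoid.inv σ.2.2⟩

/-- `Composable σ τ` means `d(σ) = r(τ)`, i.e. the product `στ` is defined. -/
def Composable (σ τ : GArrow G) : Prop := σ.1 = τ.2.1

/-- The product `στ` when `d(σ) = r(τ)`. -/
def comp (σ τ : GArrow G) (h : Composable σ τ) : GArrow G :=
  ⟨τ.1, σ.2.1, τ.2.2 ≫ eqToHom h.symm ≫ σ.2.2⟩

/-- The unit space `G₀`, as a set of arrows. -/
def GUnits (G : Type*) [Groupoid G] : Set (GArrow G) := Set.range unit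

/-- The product of two sets of arrows: `Σ * Σ' = { στ : σ ∈ Σ, τ ∈ Σ', d(σ) = r(τ) }`. -/
def setMul (A B : Set (GArrow G)) : Set (GArrow G) :=
  {ρ | ∃ σ ∈ A, ∃ τ ∈ B, ∃ h : Composable σ τ, ρ = comp σ τ h}

end GArrow

namespace GArrow
variable {G : Type*} [Groupoid G]

theorem comp_ginv_left (ρ σ : GArrow G) (h : Composable ρ σ) :
    comp (comp ρ σ h) (ginv σ) rfl = ρ := by
  obtain ⟨a, b, f⟩ := σ; obtain ⟨c, d, g⟩ := ρ
  have h' : c = b := h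
  subst h'
  simp [comp, ginv]

theorem ginv_comp_right (σ τ : GArrow G) (h : Composable τ (ginv σ)) :
    comp (comp τ (ginv σ) h) σ rfl = τ := by
  obtain ⟨a, b, f⟩ := σ; obtain ⟨c, d, g⟩ := τ
  have h' : c = a := h
  subst h'
  simp [comp, ginv]
  have key : ∀ p : b = b, f ≫ eqToHom p ≫ inv f ≫ g = g := fun p => by simp
  exact key _

end GArrow
/-- An object unital `G`-grading on an associative, not necessarily unital, ring `R`:
`R = ⊕_{σ ∈ G} R_σ`, `R_σ R_τ ⊆ R_{στ}` for composable pairs, `R_σ R_τ = 0` otherwise,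
each `R_e` (`e ∈ G₀`) is unital with identity `u e`, and
`1_{R_{r(σ)}} r = r 1_{R_{d(σ)}} = r` for every `r ∈ R_σ`. -/
structure OUGrading (G : Type*) [Groupoid G] (R : Type*) [NonUnitalRing R] where
  component : GArrow G → AddSubgroup R
  sup_eq_top : (⨆ σ : GArrow G, component σ) = ⊤
  indep : iSupIndep component
  mul_mem : ∀ (σ τ : GArrow G) (h : GArrow.Composable σ τ), ∀ r ∈ component σ,
    ∀ s ∈ component τ, r * s ∈ component (GArrow.comp σ τ h)
  mul_eq_zero : ∀ (σ τ : GArrow G), ¬ GArrow.Composable σ τ → ∀ r ∈ component σ,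
    ∀ s ∈ component τ, r * s = 0
  /-- The identity of the unital ring `R_e`, for each object (unit) `e`. -/
  u : G → R
  u_mem : ∀ a : G, u a ∈ component (GArrow.unit a)
  u_left : ∀ σ : GArrow G, ∀ r ∈ component σ, u σ.2.1 * r = r
  u_right : ∀ σ : GArrow G, ∀ r ∈ component σ, r * u σ.1 = r

/-- The axioms of a left module over a not necessarily unital ring. -/
structure NUModule (R M : Type*) [NonUnitalRing R] [AddCommGroup M] [SMul R M] : Prop where
  smul_add : ∀ (r : R) (m n : M), r • (m + n) = r • m + r • n
  add_smul : ∀ (r s : R) (m : M), (r + s) • m = r • m + s • m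
  mul_smul : ∀ (r s : R) (m : M), (r * s) • m = r • (s • m)

/-- A `G`-graded left module over a ring `R` with object unital `G`-grading `gr`. -/
structure GrModule {G : Type*} [Groupoid G] {R : Type*} [NonUnitalRing R]
    (gr : OUGrading G R) (M : Type*) [AddCommGroup M] [SMul R M] where
  smul_add : ∀ (r : R) (m n : M), r • (m + n) = r • m + r • n
  add_smul : ∀ (r s : R) (m : M), (r + s) • m = r • m + s • m
  mul_smul : ∀ (r s : R) (m : M), (r * s) • m = r • (s • m)
  component : GArrow G → AddSubgroup M
  sup_eq_top : (⨆ σ : GArrow G, component σ) = ⊤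
  indep : iSupIndep component
  smul_mem : ∀ (σ τ : GArrow G) (h : GArrow.Composable σ τ), ∀ r ∈ gr.component σ,
    ∀ m ∈ component τ, r • m ∈ component (GArrow.comp σ τ h)
  smul_eq_zero : ∀ (σ τ : GArrow G), ¬ GArrow.Composable σ τ → ∀ r ∈ gr.component σ,
    ∀ m ∈ component τ, r • m = 0

/-- A graded module is graded unital if `1_{R_{r(σ)}} • m = m` for all homogeneous `m`
of degree `σ`. -/
def GrModule.IsUnital {G : Type*} [Groupoid G] {R : Type*} [NonUnitalRing R]
    {gr : OUGrading G R} {M : Type*} [AddCommGroup M] [SMul R M]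
    (gm : GrModule gr M) : Prop :=
  ∀ σ : GArrow G, ∀ m ∈ gm.component σ, gr.u σ.2.1 • m = m

/-- A graded homomorphism between graded modules with homogeneous components `cM`, `cN`. -/
def IsGrHom {G : Type*} [Groupoid G] {R : Type*} [NonUnitalRing R]
    {M N : Type*} [AddCommGroup M] [AddCommGroup N] [SMul R M] [SMul R N]
    (cM : GArrow G → AddSubgroup M) (cN : GArrow G → AddSubgroup N) (f : M → N) : Prop :=
  (∀ x y : M, f (x + y) = f x + f y) ∧ (∀ (r : R) (x : M), f (r • x) = r • f x) ∧
    (∀ σ : GArrow G, ∀ x ∈ cM σ, f x ∈ cN σ)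

/-- A graded submodule: an additive subgroup closed under the `R`-action which is the
sum of its homogeneous components. -/
def IsGrSubmodule {G : Type*} [Groupoid G] {R : Type*} [NonUnitalRing R]
    {gr : OUGrading G R} {M : Type*} [AddCommGroup M] [SMul R M]
    (gm : GrModule gr M) (N : AddSubgroup M) : Prop :=
  (∀ (r : R), ∀ m ∈ N, r • m ∈ N) ∧ N = ⨆ σ : GArrow G, (N ⊓ gm.component σ)

open Classical in
/-- The homogeneous component of degree `τ` of the `σ'`-suspension `R(σ')`:
`R(σ')_τ = R_{τσ'}` if `(τ, σ')` is composable and `{0}` otherwise. -/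
noncomputable def suspComponent {G : Type*} [Groupoid G] {R : Type*} [NonUnitalRing R]
    (gr : OUGrading G R) (σ' τ : GArrow G) : AddSubgroup R :=
  if h : GArrow.Composable τ σ' then gr.component (GArrow.comp τ σ' h) else ⊥

/-- The `σ'`-suspension `R(σ') = ⊕_τ R(σ')_τ` of `R`, as an additive subgroup of `R`. -/
noncomputable def suspension {G : Type*} [Groupoid G] {R : Type*} [NonUnitalRing R]
    (gr : OUGrading G R) (σ' : GArrow G) : AddSubgroup R :=
  ⨆ τ : GArrow G, suspComponent gr σ' τ

/-- A graded homomorphism from a graded left ideal `S` of `R` (with homogeneous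
components `cS`) to a graded module with components `cN`. -/
def IsGrHomOn {G : Type*} [Groupoid G] {R N : Type*} [NonUnitalRing R]
    [AddCommGroup N] [SMul R N] {S : AddSubgroup R}
    (cS : GArrow G → AddSubgroup R) (cN : GArrow G → AddSubgroup N) (f : ↥S → N) : Prop :=
  (∀ x y : ↥S, f (x + y) = f x + f y) ∧
  (∀ (r : R) (x y : ↥S), (y : R) = r * (x : R) → f y = r • f x) ∧
  (∀ τ : GArrow G, ∀ x : ↥S, (x : R) ∈ cS τ → f x ∈ cN τ)

/-- A graded module is free by suspension if it is the internal direct sum of graded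
submodules, each gradedly isomorphic to a suspension `R(σᵢ)` of `R`. -/
noncomputable def FreeBySuspension {G : Type*} [Groupoid G] {R : Type*} [NonUnitalRing R]
    {gr : OUGrading G R} {M : Type*} [AddCommGroup M] [SMul R M]
    (gm : GrModule gr M) : Prop :=
  ∃ (ι : Type*) (σs : ι → GArrow G) (f : ∀ i : ι, ↥(suspension gr (σs i)) → M),
    (∀ i : ι, IsGrHomOn (suspComponent gr (σs i)) gm.component (f i)) ∧
    (∀ i : ι, Function.Injective (f i)) ∧
    iSupIndep (fun i : ι => AddSubgroup.closure (Set.range (f i))) ∧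
    (⨆ i : ι, AddSubgroup.closure (Set.range (f i))) = ⊤

/-- The set of graded homomorphisms `R → N` of degree `σ`. -/
def HomDeg {G : Type*} [Groupoid G] {R N : Type*} [NonUnitalRing R]
    [AddCommGroup N] [SMul R N] (gr : OUGrading G R)
    (cN : GArrow G → AddSubgroup N) (σ : GArrow G) : Set (R → N) :=
  {f | (∀ x y : R, f (x + y) = f x + f y) ∧ (∀ r x : R, f (r * x) = r • f x) ∧
    (∀ (τ : GArrow G) (h : GArrow.Composable τ σ), ∀ x ∈ gr.component τ,
        f x ∈ cN (GArrow.comp τ σ h)) ∧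
    (∀ τ : GArrow G, ¬ GArrow.Composable τ σ → ∀ x ∈ gr.component τ, f x = 0)}

/-- `HOM_R(R, N) = ⊕_σ HOM_R(R, N)_σ`, the additive group generated by the graded
homomorphisms of some degree. -/
def HOM {G : Type*} [Groupoid G] {R N : Type*} [NonUnitalRing R]
    [AddCommGroup N] [SMul R N] (gr : OUGrading G R)
    (cN : GArrow G → AddSubgroup N) : AddSubgroup (R → N) :=
  AddSubgroup.closure (⋃ σ : GArrow G, HomDeg gr cN σ)

/-- The left `R`-action `(r · f)(x) = f(x r)` on maps `R → N`. -/
def rAct {R N : Type*} [NonUnitalRing R] (r : R) (f : R → N) : R → N :=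
  fun x => f (x * r)

/-- `R · HOM_R(R, N)`, the unitary part of `HOM_R(R, N)` under the action `rAct`. -/
def RHOM {G : Type*} [Groupoid G] {R N : Type*} [NonUnitalRing R]
    [AddCommGroup N] [SMul R N] (gr : OUGrading G R)
    (cN : GArrow G → AddSubgroup N) : AddSubgroup (R → N) :=
  AddSubgroup.closure {g | ∃ (r : R), ∃ f ∈ HOM gr cN, g = rAct r f}

/-- A bundled graded unital left `R`-module. -/
structure GrUMod {G : Type*} [Groupoid G] {R : Type*} [NonUnitalRing R]
    (gr : OUGrading G R) where
  carrier : Type*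
  [acg : AddCommGroup carrier]
  [sm : SMul R carrier]
  str : GrModule gr carrier
  unital : str.IsUnital

attribute [instance] GrUMod.acg GrUMod.sm

/-- For homogeneous `m ∈ M_σ`, the cyclic submodule `Rm` equals
`R(σ⁻¹)m`, and it is graded: `(Rm) ∩ M_τ = R(σ⁻¹)_τ m` for every `τ`. -/
theorem stmt7 {G R M : Type*} [Groupoid G] [NonUnitalRing R] [AddCommGroup M] [SMul R M]
    (gr : OUGrading G R) (gm : GrModule gr M) (hu : gm.IsUnital)
    (σ : GArrow G) (m : M) (hm : m ∈ gm.component σ) :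
    ({x : M | ∃ r : R, x = r • m} =
      {x : M | ∃ r ∈ suspension gr (GArrow.ginv σ), x = r • m}) ∧
    (∀ τ : GArrow G,
      {x : M | ∃ r : R, x = r • m} ∩ (gm.component τ : Set M) =
        {x : M | ∃ r ∈ suspComponent gr (GArrow.ginv σ) τ, x = r • m}) := by
  classical
  have hum : gr.u σ.2.1 • m = m := hu σ m hm
  have h0 : ∀ x : M, (0 : R) • x = 0 := by
    intro x
    have h := gm.add_smul 0 0 x
    rw [add_zero] at h
    exact (left_eq_add.mp h)
  -- the map r ↦ r • m, as an additive hom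
  set φ : R →+ M := AddMonoidHom.mk' (fun r => r • m) (fun r s => gm.add_smul r s m) with hφ
  have hφ_apply : ∀ r : R, φ r = r • m := fun _ => rfl
  -- every r * u(r(σ)) lies in the suspension
  have hsus : ∀ r : R, r * gr.u σ.2.1 ∈ suspension gr (GArrow.ginv σ) := by
    intro r
    have hr : r ∈ ⨆ ρ : GArrow G, gr.component ρ := by rw [gr.sup_eq_top]; trivial
    refine AddSubgroup.iSup_induction _
        (C := fun r => r * gr.u σ.2.1 ∈ suspension gr (GArrow.ginv σ)) hr ?_ ?_ ?_
    · intro ρ r hr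
      by_cases hc : GArrow.Composable ρ σ
      · have he : r * gr.u σ.2.1 = r := by
          have : r * gr.u ρ.1 = r := gr.u_right ρ r hr
          rwa [hc] at this
        rw [he]
        refine AddSubgroup.mem_iSup_of_mem (GArrow.comp ρ σ hc) ?_
        have hcg : GArrow.Composable (GArrow.comp ρ σ hc) (GArrow.ginv σ) := rfl
        rw [suspComponent, dif_pos hcg, GArrow.comp_ginv_left]
        exact hr
      · have hnc : ¬ GArrow.Composable ρ (GArrow.unit σ.2.1) := hc
        rw [gr.mul_eq_zero ρ (GArrow.unit σ.2.1) hnc r hr (gr.u σ.2.1)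
          (gr.u_mem σ.2.1)]
        exact zero_mem _
    · show (0 : R) * gr.u σ.2.1 ∈ suspension gr (GArrow.ginv σ)
      rw [zero_mul]; exact zero_mem _
    · intro x y hx hy
      show (x + y) * gr.u σ.2.1 ∈ suspension gr (GArrow.ginv σ)
      rw [add_mul]; exact add_mem hx hy
  constructor
  · ext x
    constructor
    · rintro ⟨r, rfl⟩
      exact ⟨r * gr.u σ.2.1, hsus r, by rw [gm.mul_smul, hum]⟩
    · rintro ⟨r, _, rfl⟩
      exact ⟨r, rfl⟩
  · intro τ
    -- the internal direct sum decomposition of M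
    set A : GArrow G → Submodule ℤ M :=
      fun δ => AddSubgroup.toIntSubmodule (gm.component δ) with hA
    have hind : iSupIndep A := gm.indep.map_orderIso AddSubgroup.toIntSubmodule
    have hsup : (⨆ δ, A δ) = ⊤ := by
      rw [hA]
      rw [← map_iSup (AddSubgroup.toIntSubmodule : AddSubgroup M ≃o Submodule ℤ M)
        gm.component, gm.sup_eq_top]
      rfl
    have hInt : DirectSum.IsInternal A :=
      DirectSum.isInternal_submodule_of_iSupIndep_of_iSup_eq_top hind hsup
    set e := LinearEquiv.ofBijective (DirectSum.coeLinearMap A) hInt with he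
    -- the projection of r • m onto the τ-component lies in (suspComponent _ _ τ) • m
    have key : ∀ r : R, ((e.symm (r • m)) τ : M) ∈
        AddSubgroup.map φ (suspComponent gr (GArrow.ginv σ) τ) := by
      intro r
      have hr : r ∈ ⨆ ρ : GArrow G, gr.component ρ := by rw [gr.sup_eq_top]; trivial
      refine AddSubgroup.iSup_induction _ (C := fun r => ((e.symm (r • m)) τ : M) ∈
          AddSubgroup.map φ (suspComponent gr (GArrow.ginv σ) τ)) hr ?_ ?_ ?_
      · intro ρ r hr
        by_cases hc : GArrow.Composable ρ σ
        · have hmem : r • m ∈ A (GArrow.comp ρ σ hc) :=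
            gm.smul_mem ρ σ hc r hr m hm
          by_cases hδ : GArrow.comp ρ σ hc = τ
          · rw [hInt.ofBijective_coeLinearMap_of_mem (hδ ▸ hmem)]
            refine ⟨r, ?_, rfl⟩
            have hcg : GArrow.Composable τ (GArrow.ginv σ) := by
              rw [← hδ]; rfl
            rw [suspComponent, dif_pos hcg]
            have : GArrow.comp τ (GArrow.ginv σ) hcg = ρ := by
              subst hδ
              exact GArrow.comp_ginv_left ρ σ hc
            rw [this]
            exact hr
          · rw [hInt.ofBijective_coeLinearMap_of_mem_ne hδ hmem]
            exact zero_mem _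
        · rw [gm.smul_eq_zero ρ σ hc r hr m hm, map_zero]
          simp only [DirectSum.zero_apply, ZeroMemClass.coe_zero]
          exact zero_mem _
      · show ((e.symm ((0 : R) • m)) τ : M) ∈ AddSubgroup.map φ (suspComponent gr (GArrow.ginv σ) τ)
        rw [h0, map_zero]
        simp only [DirectSum.zero_apply, ZeroMemClass.coe_zero]
        exact zero_mem _
      · intro x y hx hy
        show ((e.symm ((x + y) • m)) τ : M) ∈ AddSubgroup.map φ (suspComponent gr (GArrow.ginv σ) τ)
        rw [gm.add_smul, map_add]
        simp only [DirectSum.add_apply, AddSubmonoid.coe_add]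
        exact add_mem hx hy
    ext x
    constructor
    · rintro ⟨⟨r, rfl⟩, hxτ⟩
      have hxA : r • m ∈ A τ := hxτ
      have hproj : ((e.symm (r • m)) τ : M) = r • m := by
        rw [hInt.ofBijective_coeLinearMap_of_mem hxA]
      obtain ⟨s, hs, hsx⟩ := key r
      refine ⟨s, hs, ?_⟩
      show r • m = s • m
      rw [← hproj, ← hsx, hφ_apply]
    · rintro ⟨r, hrs, rfl⟩
      refine ⟨⟨r, rfl⟩, ?_⟩
      rw [suspComponent] at hrs
      by_cases hcg : GArrow.Composable τ (GArrow.ginv σ)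
      · rw [dif_pos hcg] at hrs
        have hcc : GArrow.Composable (GArrow.comp τ (GArrow.ginv σ) hcg) σ := rfl
        have := gm.smul_mem (GArrow.comp τ (GArrow.ginv σ) hcg) σ hcc r hrs m hm
        rwa [GArrow.ginv_comp_right] at this
      · rw [dif_neg hcg] at hrs
        rw [AddSubgroup.mem_bot.mp hrs, h0]
        exact zero_mem _
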